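/- arXiv:2109.00764 — 3 statements merged into one kernel-verified Lean document; each statement's English description precedes it below -/
import Mathlib

section
/- Let λ_1 ≥ λ_2 ≥ … ≥ λ_n ≥ 0 be nonnegative real numbers, let q ∈ {0,…,n}, and let σ_n^j(λ) denote the j-th elementary symmetric function of λ_1,…,λ_n. Then Σ_{j=0}^{q} (−1)^{q−j} σ_n^j(λ) − 1_{{λ_{q+1} < 1}} · (−1)^q · Π_{j=1}^{n} (1 − λ_j) ≥ 0, where 1_{{λ_{q+1} < 1}} is 1 if q < n and λ_{q+1} < 1 (with the convention that for q = n the indicator is 1), and 0 otherwise. -/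
open Finset

noncomputable def esum (f : ℕ → ℝ) (n j : ℕ) : ℝ :=
  ∑ A ∈ (Finset.range n).powersetCard j, ∏ i ∈ A, f i

noncomputable def Ssum (f : ℕ → ℝ) (n q : ℕ) : ℝ :=
  ∑ j ∈ Finset.range q, (-1 : ℝ) ^ (q - 1 - j) * esum f n j

lemma esum_zero (f : ℕ → ℝ) (n : ℕ) : esum f n 0 = 1 := by
  simp [esum, powersetCard_zero]

lemma esum_of_lt (f : ℕ → ℝ) {n j : ℕ} (h : n < j) : esum f n j = 0 := by
  rw [esum, powersetCard_eq_empty.2 (by simpa using h), sum_empty]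

lemma esum_succ (f : ℕ → ℝ) (n j : ℕ) :
    esum f (n + 1) (j + 1) = esum f n (j + 1) + f n * esum f n j := by
  have hn : n ∉ Finset.range n := notMem_range_self
  rw [esum, range_add_one, powersetCard_succ_insert hn, sum_union, esum, esum]
  · congr 1
    rw [sum_image, mul_sum]
    · refine sum_congr rfl fun A hA => ?_
      rw [prod_insert]
      exact fun hmem => hn ((mem_powersetCard.1 hA).1 hmem)
    · intro A hA B hB hAB
      have hA' : n ∉ A := fun hmem => hn ((mem_powersetCard.1 hA).1 hmem)
      have hB' : n ∉ B := fun hmem => hn ((mem_powersetCard.1 hB).1 hmem)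
      rw [← erase_insert hA', ← erase_insert hB', hAB]
  · rw [disjoint_right]
    intro A hA hA'
    obtain ⟨B, _, rfl⟩ := mem_image.1 hA
    exact hn ((mem_powersetCard.1 hA').1 (mem_insert_self n B))

lemma Ssum_succ_succ (f : ℕ → ℝ) (n q : ℕ) :
    Ssum f (n + 1) (q + 1) = Ssum f n (q + 1) + f n * Ssum f n q := by
  rw [Ssum, Ssum, Ssum, sum_range_succ', sum_range_succ']
  have key : ∀ j ∈ Finset.range q,
      (-1 : ℝ) ^ (q + 1 - 1 - (j + 1)) * esum f (n + 1) (j + 1)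
      = (-1 : ℝ) ^ (q + 1 - 1 - (j + 1)) * esum f n (j + 1)
        + f n * ((-1 : ℝ) ^ (q - 1 - j) * esum f n j) := by
    intro j _
    rw [esum_succ]
    have : q + 1 - 1 - (j + 1) = q - 1 - j := by omega
    rw [this]; ring
  rw [sum_congr rfl key, sum_add_distrib, esum_zero, esum_zero, mul_sum]
  ring

lemma Ssum_identity (f : ℕ → ℝ) (n : ℕ) :
    Ssum f n (n + 1) = (-1 : ℝ) ^ n * ∏ i ∈ Finset.range n, (1 - f i) := by
  induction n with
  | zero => simp [Ssum, esum_zero]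
  | succ n ih =>
    have hneg : Ssum f n (n + 2) = - Ssum f n (n + 1) := by
      rw [Ssum, Ssum, sum_range_succ, esum_of_lt f (by omega), mul_zero, add_zero,
        ← sum_neg_distrib]
      refine sum_congr rfl fun j hj => ?_
      have hj' : j ≤ n := by have := mem_range.1 hj; omega
      have : n + 2 - 1 - j = (n - j) + 1 := by omega
      have h2 : n + 1 - 1 - j = n - j := by omega
      rw [this, h2, pow_succ]
      ring
    rw [Ssum_succ_succ, hneg, ih, prod_range_succ, pow_succ]
    ring

lemma sign_lemma (f : ℕ → ℝ) {n q : ℕ} (hq : q ≤ n)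
    (h1 : ∀ i, i < q → 1 ≤ f i) (h2 : ∀ i, q ≤ i → i < n → f i ≤ 1) :
    0 ≤ (-1 : ℝ) ^ q * ∏ i ∈ Finset.range n, (1 - f i) := by
  rw [← prod_range_mul_prod_Ico _ hq, ← mul_assoc]
  have : (-1 : ℝ) ^ q * ∏ i ∈ Finset.range q, (1 - f i)
      = ∏ i ∈ Finset.range q, (f i - 1) := by
    rw [show ((-1 : ℝ) ^ q) = ∏ _i ∈ Finset.range q, (-1 : ℝ) by
      simp, ← prod_mul_distrib]
    exact prod_congr rfl fun i _ => by ring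
  rw [this]
  refine mul_nonneg (prod_nonneg fun i hi => ?_) (prod_nonneg fun i hi => ?_)
  · have := h1 i (mem_range.1 hi); linarith
  · obtain ⟨h, h'⟩ := mem_Ico.1 hi
    have := h2 i h h'; linarith

lemma aux (f : ℕ → ℝ) (hmono : ∀ i j : ℕ, i ≤ j → f j ≤ f i) (hpos : ∀ i, 0 ≤ f i) :
    ∀ n q, q ≤ n →
      0 ≤ Ssum f n (q + 1) - (if q < n then (if f q < 1 then (1:ℝ) else 0) else 1) *
          ((-1 : ℝ) ^ q * ∏ i ∈ Finset.range n, (1 - f i)) := by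
  intro n
  induction n with
  | zero =>
    intro q hq
    interval_cases q
    simp [Ssum, esum_zero]
  | succ n ih =>
    intro q hq
    rcases Nat.lt_or_ge q (n + 1) with hqn | hqn
    · -- q ≤ n
      have hq' : q ≤ n := by omega
      rw [if_pos hqn, Ssum_succ_succ, prod_range_succ]
      rcases lt_or_ge (f q) 1 with hfq | hfq
      · -- indicator 1
        rw [if_pos hfq]
        have b1 : 0 ≤ Ssum f n (q + 1) - (-1 : ℝ) ^ q * ∏ i ∈ Finset.range n, (1 - f i) := by
          have := ih q hq'
          rcases Nat.lt_or_ge q n with h | h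
          · rwa [if_pos h, if_pos hfq, one_mul] at this
          · rwa [if_neg (by omega), one_mul] at this
        have b2 : 0 ≤ Ssum f n q + (-1 : ℝ) ^ q * ∏ i ∈ Finset.range n, (1 - f i) := by
          rcases Nat.eq_zero_or_pos q with rfl | hq0
          · have : (0:ℝ) ≤ (-1 : ℝ) ^ 0 * ∏ i ∈ Finset.range n, (1 - f i) :=
              sign_lemma f (Nat.zero_le n) (fun i hi => absurd hi (Nat.not_lt_zero i))
                (fun i _ hi => le_of_lt (lt_of_le_of_lt (hmono 0 i (Nat.zero_le i)) hfq))
            simpa [Ssum] using this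
          · obtain ⟨q', rfl⟩ : ∃ q', q = q' + 1 := ⟨q - 1, by omega⟩
            have hq'n : q' < n := by omega
            have := ih q' (by omega)
            rw [if_pos hq'n] at this
            rcases lt_or_ge (f q') 1 with hfq' | hfq'
            · rw [if_pos hfq', one_mul] at this
              rw [pow_succ]
              linarith
            · rw [if_neg (not_lt.2 hfq'), zero_mul, sub_zero] at this
              have hs : 0 ≤ (-1 : ℝ) ^ (q' + 1) * ∏ i ∈ Finset.range n, (1 - f i) :=
                sign_lemma f (by omega)
                  (fun i hi => le_trans hfq' (hmono i q' (by omega)))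
                  (fun i h1i h2i => le_of_lt (lt_of_le_of_lt (hmono (q' + 1) i h1i) hfq))
              linarith
        nlinarith [hpos n, b1, b2]
      · -- indicator 0 : f q ≥ 1
        rw [if_neg (not_lt.2 hfq), zero_mul, sub_zero]
        have b1 : 0 ≤ Ssum f n (q + 1) := by
          rcases Nat.lt_or_ge q n with h | h
          · have := ih q hq'
            rwa [if_pos h, if_neg (not_lt.2 hfq), zero_mul, sub_zero] at this
          · have hqn' : q = n := by omega
            subst hqn'
            rw [Ssum_identity]
            exact sign_lemma f le_rfl
              (fun i hi => le_trans hfq (hmono i q (by omega)))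
              (fun i h1i h2i => absurd h2i (by omega))
        have b2 : 0 ≤ Ssum f n q := by
          rcases Nat.eq_zero_or_pos q with rfl | hq0
          · simp [Ssum]
          · obtain ⟨q', rfl⟩ : ∃ q', q = q' + 1 := ⟨q - 1, by omega⟩
            have := ih q' (by omega)
            have hfq' : ¬ f q' < 1 :=
              not_lt.2 (le_trans hfq (hmono q' (q' + 1) (by omega)))
            rwa [if_pos (by omega : q' < n), if_neg hfq', zero_mul, sub_zero] at this
        nlinarith [hpos n]
    · -- q = n + 1
      obtain rfl : q = n + 1 := le_antisymm hq hqn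
      rw [if_neg (lt_irrefl _), Ssum_identity, one_mul, sub_self]

/-- Key pointwise lemma for algebraic Morse inequalities:
for `λ₁ ≥ ⋯ ≥ λₙ ≥ 0` and `0 ≤ q ≤ n`,
`∑_{j≤q} (-1)^{q-j} σⁿⱼ(λ) - 𝟙_{λ_{q+1}<1} (-1)^q ∏ (1-λⱼ) ≥ 0`. -/
theorem stmt_1 (n q : ℕ) (hq : q ≤ n) (lam : Fin n → ℝ)
    (hmono : ∀ i j : Fin n, i ≤ j → lam j ≤ lam i)
    (hpos : ∀ i, 0 ≤ lam i) :
    0 ≤ (∑ j ∈ Finset.range (q + 1), (-1 : ℝ) ^ (q - j) *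
          (∑ A ∈ Finset.univ.powersetCard j, ∏ i ∈ A, lam i))
        - (if h : q < n then (if lam ⟨q, h⟩ < 1 then (1 : ℝ) else 0) else 1) *
            ((-1 : ℝ) ^ q * ∏ i, (1 - lam i)) := by
  set f : ℕ → ℝ := fun i => if h : i < n then lam ⟨i, h⟩ else 0 with hf
  have hfv : ∀ i : Fin n, f i.val = lam i := fun i => by simp [hf, i.isLt]
  have hmono' : ∀ i j : ℕ, i ≤ j → f j ≤ f i := by
    intro i j hij
    by_cases hj : j < n
    · have hi : i < n := lt_of_le_of_lt hij hj
      simp only [hf, dif_pos hj, dif_pos hi]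
      exact hmono ⟨i, hi⟩ ⟨j, hj⟩ hij
    · simp only [hf, dif_neg hj]
      by_cases hi : i < n
      · simp only [dif_pos hi]; exact hpos _
      · simp [dif_neg hi]
  have hpos' : ∀ i, 0 ≤ f i := by
    intro i; by_cases hi : i < n
    · simp only [hf, dif_pos hi]; exact hpos _
    · simp [hf, dif_neg hi]
  have key := aux f hmono' hpos' n q hq
  have hesum : ∀ j, esum f n j
      = ∑ A ∈ (Finset.univ : Finset (Fin n)).powersetCard j, ∏ i ∈ A, lam i := by
    intro j
    rw [esum, ← Nat.Iio_eq_range, ← Fin.map_valEmbedding_univ, powersetCard_map, sum_map]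
    refine sum_congr rfl fun A _ => ?_
    rw [show (mapEmbedding Fin.valEmbedding).toEmbedding A = A.map Fin.valEmbedding from rfl, prod_map]
    exact prod_congr rfl fun i _ => hfv i
  have hS : Ssum f n (q + 1) = ∑ j ∈ Finset.range (q + 1), (-1 : ℝ) ^ (q - j) *
      (∑ A ∈ Finset.univ.powersetCard j, ∏ i ∈ A, lam i) := by
    rw [Ssum]
    exact sum_congr rfl fun j _ => by rw [hesum j, Nat.add_sub_cancel]
  have hP : ∏ i ∈ Finset.range n, (1 - f i) = ∏ i, (1 - lam i) := by
    rw [← Fin.prod_univ_eq_prod_range (fun i => 1 - f i) n]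
    exact prod_congr rfl fun i _ => by rw [hfv]
  have hI : (if q < n then (if f q < 1 then (1 : ℝ) else 0) else 1)
      = (if h : q < n then (if lam ⟨q, h⟩ < 1 then (1 : ℝ) else 0) else 1) := by
    by_cases h : q < n
    · rw [if_pos h, dif_pos h]
      have : f q = lam ⟨q, h⟩ := by simp [hf, h]
      rw [this]
    · rw [if_neg h, dif_neg h]
  rwa [hS, hP, hI] at key
end

section
/- For complex numbers a_1, …, a_p, let s_k denote the k-th elementary symmetric function of a_1, …, a_p (with s_0 = 1). Then Π_{j=1}^{p} (1 + |a_j|^2) ≤ Σ_{k=0}^{p} k!·(p−k)!·|s_k|^2. -/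
open Finset Complex

private lemma esymm_insert {ι : Type*} [DecidableEq ι] {x : ι} {s : Finset ι} (h : x ∉ s)
    (a : ι → ℂ) (n : ℕ) :
    ∑ A ∈ (insert x s).powersetCard (n + 1), ∏ j ∈ A, a j
      = ∑ A ∈ s.powersetCard (n + 1), ∏ j ∈ A, a j
        + a x * ∑ A ∈ s.powersetCard n, ∏ j ∈ A, a j := by
  rw [powersetCard_succ_insert h, sum_union, mul_sum, sum_image]
  · congr 1
    refine sum_congr rfl fun A hA => ?_
    have hxA : x ∉ A := fun hx => h ((mem_powersetCard.mp hA).1 hx)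
    rw [prod_insert hxA]
  · intro A hA B hB hAB
    have hxA : x ∉ A := fun hx => h ((mem_powersetCard.mp hA).1 hx)
    have hxB : x ∉ B := fun hx => h ((mem_powersetCard.mp hB).1 hx)
    rw [← erase_insert hxA, ← erase_insert hxB, hAB]
  · rw [disjoint_left]
    intro A hA hA'
    obtain ⟨B, hB, rfl⟩ := mem_image.mp hA'
    exact (fun hx => h ((mem_powersetCard.mp hA).1 hx)) (mem_insert_self x B)

private lemma esymm_zero' {ι : Type*} (s : Finset ι) (a : ι → ℂ) :
    ∑ A ∈ s.powersetCard 0, ∏ j ∈ A, a j = 1 := by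
  simp [powersetCard_zero]

private lemma esymm_top {ι : Type*} (s : Finset ι) (a : ι → ℂ) :
    ∑ A ∈ s.powersetCard (s.card + 1), ∏ j ∈ A, a j = 0 := by
  rw [powersetCard_eq_empty.mpr (by omega), sum_empty]


private lemma coeffA {m k : ℕ} (hk : k < m) :
    (k.factorial * (m + 1 - k).factorial : ℝ)
      = (k.factorial * (m - k).factorial : ℝ)
        + ((m - k : ℕ) : ℝ) ^ 2 * (k.factorial * (m - 1 - k).factorial : ℝ) := by
  obtain ⟨j, rfl⟩ : ∃ j, m = k + (j + 1) := ⟨m - k - 1, by omega⟩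
  have h1 : k + (j + 1) + 1 - k = j + 2 := by omega
  have h2 : k + (j + 1) - k = j + 1 := by omega
  have h3 : k + (j + 1) - 1 - k = j := by omega
  rw [h1, h2, h3]
  simp [Nat.factorial_succ]
  ring

private lemma key (m : ℕ) (b : ℂ) (f : ℕ → ℂ) (hf : f (m + 1) = 0) :
    (1 + normSq b) * ∑ k ∈ range (m + 1),
        (k.factorial * (m - k).factorial : ℝ) * normSq (f k)
      ≤ ((m + 1).factorial : ℝ) * normSq (f 0)
        + ∑ k ∈ range (m + 1),
            ((k + 1).factorial * (m - k).factorial : ℝ) * normSq (f (k + 1) + b * f k) := by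
  -- the nonnegative discrepancy
  have hD : (0:ℝ) ≤ ∑ k ∈ range m, (k.factorial * (m - 1 - k).factorial : ℝ) *
      normSq (((m - k : ℕ) : ℂ) * f k + ((k + 1 : ℕ) : ℂ) * (starRingEnd ℂ) b * f (k + 1)) := by
    refine sum_nonneg fun k _ => mul_nonneg (by positivity) (normSq_nonneg _)
  -- expansion of the RHS summand
  have h1 : ∑ k ∈ range (m + 1),
        ((k + 1).factorial * (m - k).factorial : ℝ) * normSq (f (k + 1) + b * f k)
      = (∑ k ∈ range (m + 1), ((k + 1).factorial * (m - k).factorial : ℝ) * normSq (f (k + 1)))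
        + (∑ k ∈ range (m + 1),
            ((k + 1).factorial * (m - k).factorial : ℝ) * (normSq b * normSq (f k)))
        + ∑ k ∈ range (m + 1),
            ((k + 1).factorial * (m - k).factorial : ℝ) *
              (2 * (f (k + 1) * (starRingEnd ℂ) (b * f k)).re) := by
    rw [← sum_add_distrib, ← sum_add_distrib]
    refine sum_congr rfl fun k _ => ?_
    rw [normSq_add, normSq_mul]
    ring
  -- identity A
  have hA : ((m + 1).factorial : ℝ) * normSq (f 0)
        + ∑ k ∈ range (m + 1), ((k + 1).factorial * (m - k).factorial : ℝ) * normSq (f (k + 1))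
      = (∑ k ∈ range (m + 1), (k.factorial * (m - k).factorial : ℝ) * normSq (f k))
        + ∑ k ∈ range m,
            ((m - k : ℕ) : ℝ) ^ 2 * (k.factorial * (m - 1 - k).factorial : ℝ) * normSq (f k) := by
    have key0 : ∑ k ∈ range (m + 2), (k.factorial * (m + 1 - k).factorial : ℝ) * normSq (f k)
        = (∑ k ∈ range (m + 1),
            ((k + 1).factorial * (m - k).factorial : ℝ) * normSq (f (k + 1)))
          + ((m + 1).factorial : ℝ) * normSq (f 0) := by
      rw [sum_range_succ']
      congr 1
      · exact sum_congr rfl fun k _ => by rw [Nat.succ_sub_succ]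
      · norm_num
    have e3 : ∑ k ∈ range m, (k.factorial * (m + 1 - k).factorial : ℝ) * normSq (f k)
        = ∑ k ∈ range m, ((k.factorial * (m - k).factorial : ℝ) * normSq (f k)
            + ((m - k : ℕ) : ℝ) ^ 2 * (k.factorial * (m - 1 - k).factorial : ℝ) * normSq (f k)) := by
      refine sum_congr rfl fun k hk => ?_
      rw [coeffA (mem_range.mp hk)]
      ring
    rw [add_comm (((m + 1).factorial : ℝ) * normSq (f 0)), ← key0, sum_range_succ,
      sum_range_succ, sum_range_succ (fun k => (k.factorial * (m - k).factorial : ℝ) * normSq (f k)),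
      hf, e3, sum_add_distrib]
    simp
    ring
  -- identity B
  have hB : ∑ k ∈ range (m + 1),
        ((k + 1).factorial * (m - k).factorial : ℝ) * (normSq b * normSq (f k))
      = normSq b * (∑ k ∈ range (m + 1), (k.factorial * (m - k).factorial : ℝ) * normSq (f k))
        + ∑ k ∈ range m, ((k + 1 : ℕ) : ℝ) ^ 2 * (k.factorial * (m - 1 - k).factorial : ℝ)
            * (normSq b * normSq (f (k + 1))) := by
    have hsplit : ∑ k ∈ range (m + 1),
          ((k + 1).factorial * (m - k).factorial : ℝ) * (normSq b * normSq (f k))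
        = (∑ k ∈ range (m + 1),
            (k.factorial * (m - k).factorial : ℝ) * (normSq b * normSq (f k)))
          + ∑ k ∈ range (m + 1),
              ((k : ℝ) * (k.factorial * (m - k).factorial : ℝ)) * (normSq b * normSq (f k)) := by
      rw [← sum_add_distrib]
      refine sum_congr rfl fun k _ => ?_
      rw [Nat.factorial_succ]
      push_cast
      ring
    have hx : ∑ k ∈ range (m + 1),
          (k.factorial * (m - k).factorial : ℝ) * (normSq b * normSq (f k))
        = normSq b * ∑ k ∈ range (m + 1),
            (k.factorial * (m - k).factorial : ℝ) * normSq (f k) := by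
      rw [mul_sum]
      exact sum_congr rfl fun k _ => by ring
    have hy : ∑ k ∈ range (m + 1),
          ((k : ℝ) * (k.factorial * (m - k).factorial : ℝ)) * (normSq b * normSq (f k))
        = ∑ k ∈ range m, ((k + 1 : ℕ) : ℝ) ^ 2 * (k.factorial * (m - 1 - k).factorial : ℝ)
            * (normSq b * normSq (f (k + 1))) := by
      rw [sum_range_succ' (fun k =>
        ((k : ℝ) * (k.factorial * (m - k).factorial : ℝ)) * (normSq b * normSq (f k)))]
      simp only [Nat.cast_zero, zero_mul, add_zero]
      refine sum_congr rfl fun k hk => ?_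
      rw [show m - (k + 1) = m - 1 - k from by omega, Nat.factorial_succ]
      push_cast
      ring
    rw [hsplit, hx, hy]
  -- identity C
  have hC : ∑ k ∈ range (m + 1), ((k + 1).factorial * (m - k).factorial : ℝ) *
        (2 * (f (k + 1) * (starRingEnd ℂ) (b * f k)).re)
      = ∑ k ∈ range m, ((k + 1).factorial * (m - k).factorial : ℝ) *
        (2 * (f (k + 1) * (starRingEnd ℂ) (b * f k)).re) := by
    rw [sum_range_succ, hf]
    simp
  -- expansion of the discrepancy
  have hDexp : ∑ k ∈ range m, (k.factorial * (m - 1 - k).factorial : ℝ) *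
        normSq (((m - k : ℕ) : ℂ) * f k + ((k + 1 : ℕ) : ℂ) * (starRingEnd ℂ) b * f (k + 1))
      = (∑ k ∈ range m,
          ((m - k : ℕ) : ℝ) ^ 2 * (k.factorial * (m - 1 - k).factorial : ℝ) * normSq (f k))
        + (∑ k ∈ range m, ((k + 1 : ℕ) : ℝ) ^ 2 * (k.factorial * (m - 1 - k).factorial : ℝ)
            * (normSq b * normSq (f (k + 1))))
        + ∑ k ∈ range m, ((k + 1).factorial * (m - k).factorial : ℝ) *
            (2 * (f (k + 1) * (starRingEnd ℂ) (b * f k)).re) := by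
    rw [← sum_add_distrib, ← sum_add_distrib]
    refine sum_congr rfl fun k hk => ?_
    have hk' := mem_range.mp hk
    rw [show m - k = m - 1 - k + 1 from by omega]
    simp only [Nat.factorial_succ]
    simp only [normSq_apply, Complex.add_re, Complex.add_im, Complex.mul_re, Complex.mul_im,
      Complex.natCast_re, Complex.natCast_im, Complex.conj_re, Complex.conj_im]
    push_cast
    ring
  -- assembly
  have main : ((m + 1).factorial : ℝ) * normSq (f 0)
        + ∑ k ∈ range (m + 1),
            ((k + 1).factorial * (m - k).factorial : ℝ) * normSq (f (k + 1) + b * f k)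
      = (1 + normSq b) * (∑ k ∈ range (m + 1),
            (k.factorial * (m - k).factorial : ℝ) * normSq (f k))
        + ∑ k ∈ range m, (k.factorial * (m - 1 - k).factorial : ℝ) *
            normSq (((m - k : ℕ) : ℂ) * f k + ((k + 1 : ℕ) : ℂ) * (starRingEnd ℂ) b * f (k + 1)) := by
    linear_combination h1 + hA + hB + hC - hDexp
  linarith [hD, main.ge]


private lemma main_ineq {ι : Type*} [DecidableEq ι] (s : Finset ι) (a : ι → ℂ) :
    ∏ j ∈ s, (1 + normSq (a j))
      ≤ ∑ k ∈ range (s.card + 1), (k.factorial * (s.card - k).factorial : ℝ) *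
          normSq (∑ A ∈ s.powersetCard k, ∏ j ∈ A, a j) := by
  induction s using Finset.induction_on with
  | empty => simp
  | @insert x s hx ih =>
    rw [prod_insert hx, card_insert_of_notMem hx]
    calc (1 + normSq (a x)) * ∏ j ∈ s, (1 + normSq (a j))
        ≤ (1 + normSq (a x)) * ∑ k ∈ range (s.card + 1),
            (k.factorial * (s.card - k).factorial : ℝ) *
              normSq (∑ A ∈ s.powersetCard k, ∏ j ∈ A, a j) := by
          refine mul_le_mul_of_nonneg_left ih ?_
          have := normSq_nonneg (a x)
          linarith
      _ ≤ ((s.card + 1).factorial : ℝ) *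
              normSq (∑ A ∈ s.powersetCard 0, ∏ j ∈ A, a j)
            + ∑ k ∈ range (s.card + 1),
                ((k + 1).factorial * (s.card - k).factorial : ℝ) *
                  normSq ((∑ A ∈ s.powersetCard (k + 1), ∏ j ∈ A, a j)
                    + a x * ∑ A ∈ s.powersetCard k, ∏ j ∈ A, a j) := by
          refine key s.card (a x) (fun k => ∑ A ∈ s.powersetCard k, ∏ j ∈ A, a j) ?_
          show ∑ A ∈ s.powersetCard (s.card + 1), ∏ j ∈ A, a j = 0
          rw [powersetCard_eq_empty.mpr (by omega), sum_empty]
      _ = ∑ k ∈ range (s.card + 1 + 1), (k.factorial * (s.card + 1 - k).factorial : ℝ) *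
            normSq (∑ A ∈ (insert x s).powersetCard k, ∏ j ∈ A, a j) := by
          rw [sum_range_succ' (fun k => (k.factorial * (s.card + 1 - k).factorial : ℝ) *
            normSq (∑ A ∈ (insert x s).powersetCard k, ∏ j ∈ A, a j)) (s.card + 1), add_comm]
          congr 1
          · refine sum_congr rfl fun k _ => ?_
            rw [esymm_insert hx, Nat.succ_sub_succ]
          · simp [powersetCard_zero]

/-- `∏ (1+|aⱼ|²) ≤ ∑ k!(p-k)! |s_k|²` where `s_k` is the `k`-th elementary
symmetric function of `a₁,…,a_p`. -/
theorem stmt_7 (p : ℕ) (a : Fin p → ℂ) :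
    ∏ j, (1 + ‖a j‖ ^ 2)
      ≤ ∑ k ∈ Finset.range (p + 1),
          (k.factorial * (p - k).factorial : ℝ) *
            ‖∑ A ∈ Finset.univ.powersetCard k, ∏ j ∈ A, a j‖ ^ 2 := by
  have := main_ineq (univ : Finset (Fin p)) a
  simpa [Complex.sq_norm, card_univ] using this
end

section
/- For complex numbers a_1, …, a_p with elementary symmetric functions s_0 = 1, s_1, …, s_p, one has Π_{j=1}^{p} (1 + |a_j|^2) ≤ 2^p · Σ_{k=0}^{p} |s_k|^2. -/
open Finset

noncomputable section LandauAux

local notation "conj'" => starRingEnd ℂ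

lemma esymm_zero'_s8 (s : Multiset ℂ) : s.esymm 0 = 1 := by
  simp [Multiset.esymm, Multiset.powersetCard_zero_left]

lemma esymm_cons (a : ℂ) (s : Multiset ℂ) (k : ℕ) :
    (a ::ₘ s).esymm (k + 1) = s.esymm (k + 1) + a * s.esymm k := by
  rw [Multiset.esymm, Multiset.powersetCard_cons, Multiset.map_add, Multiset.sum_add,
    Multiset.map_map]
  congr 1
  rw [Multiset.esymm, ← Multiset.sum_map_mul_left]
  congr 1
  apply Multiset.map_congr rfl
  intro t _
  simp [Multiset.prod_cons]

lemma esymm_top_s8 (s : Multiset ℂ) : s.esymm (Multiset.card s + 1) = 0 := by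
  rw [Multiset.esymm, Multiset.powersetCard_eq_empty _ (by omega)]
  simp

/-- The `ℓ²` norm squared of the coefficient vector of `∏ (X - aⱼ)`. -/
def Sfn (s : Multiset ℂ) : ℝ :=
  ∑ k ∈ Finset.range (Multiset.card s + 1), Complex.normSq (s.esymm k)

def Xfn (a : ℂ) (t : Multiset ℂ) : ℝ :=
  ∑ k ∈ Finset.range (Multiset.card t + 1),
    (t.esymm (k + 1) * conj' a * conj' (t.esymm k)).re

lemma Sfn_cons (a : ℂ) (t : Multiset ℂ) :
    Sfn (a ::ₘ t) = (1 + Complex.normSq a) * Sfn t + 2 * Xfn a t := by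
  rw [Sfn, Multiset.card_cons]
  rw [Finset.sum_range_succ' (fun k => Complex.normSq ((a ::ₘ t).esymm k))]
  have h0 : (a ::ₘ t).esymm 0 = 1 := esymm_zero'_s8 _
  have hterm : ∀ k, Complex.normSq ((a ::ₘ t).esymm (k + 1))
      = Complex.normSq (t.esymm (k + 1)) + Complex.normSq a * Complex.normSq (t.esymm k)
        + 2 * (t.esymm (k + 1) * conj' a * conj' (t.esymm k)).re := by
    intro k
    rw [esymm_cons, Complex.normSq_add, Complex.normSq_mul]
    congr 1
    rw [map_mul]
    ring_nf
  simp only [hterm, h0]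
  rw [Finset.sum_add_distrib, Finset.sum_add_distrib]
  have hshift : (∑ k ∈ Finset.range (Multiset.card t + 1), Complex.normSq (t.esymm (k + 1)))
      + Complex.normSq (1 : ℂ) = Sfn t := by
    have : (∑ k ∈ Finset.range (Multiset.card t + 1), Complex.normSq (t.esymm (k + 1)))
        + Complex.normSq (t.esymm 0)
        = ∑ k ∈ Finset.range (Multiset.card t + 2), Complex.normSq (t.esymm k) := by
      rw [Finset.sum_range_succ' (fun k => Complex.normSq (t.esymm k))]
    rw [esymm_zero'_s8] at this
    rw [this, Finset.sum_range_succ, esymm_top_s8]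
    simp [Sfn]
  have hmul : ∑ k ∈ Finset.range (Multiset.card t + 1), Complex.normSq a * Complex.normSq (t.esymm k)
      = Complex.normSq a * Sfn t := by
    rw [← Finset.mul_sum]; rfl
  have hX : ∑ k ∈ Finset.range (Multiset.card t + 1),
      2 * (t.esymm (k + 1) * conj' a * conj' (t.esymm k)).re = 2 * Xfn a t := by
    rw [← Finset.mul_sum]; rfl
  linarith [hshift, hmul, hX]

lemma Sfn_swap {a : ℂ} (ha : a ≠ 0) (t : Multiset ℂ) :
    Sfn (a ::ₘ t) = Complex.normSq a * Sfn ((conj' a)⁻¹ ::ₘ t) := by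
  set b := (conj' a)⁻¹ with hb
  have hnsa : Complex.normSq a ≠ 0 := (Complex.normSq_pos.2 ha).ne'
  have hnsb : Complex.normSq b = (Complex.normSq a)⁻¹ := by
    rw [hb, Complex.normSq_inv, Complex.normSq_conj]
  have hX : Complex.normSq a * Xfn b t = Xfn a t := by
    rw [Xfn, Xfn, Finset.mul_sum]
    apply Finset.sum_congr rfl
    intro k _
    rw [← Complex.re_ofReal_mul]
    congr 1
    have hconjb : conj' b = a⁻¹ := by
      rw [hb, map_inv₀, Complex.conj_conj]
    have : (Complex.normSq a : ℂ) = a * conj' a := (Complex.mul_conj a).symm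
    rw [this, hconjb]
    field_simp
  have h2 : Complex.normSq a * (2 * Xfn b t) = 2 * Xfn a t := by rw [← hX]; ring
  rw [Sfn_cons, Sfn_cons, hnsb, mul_add, ← mul_assoc, h2]
  have h1 : Complex.normSq a * (1 + (Complex.normSq a)⁻¹) = Complex.normSq a + 1 := by
    field_simp
  rw [h1]
  ring

lemma Sfn_nonneg (s : Multiset ℂ) : 0 ≤ Sfn s :=
  Finset.sum_nonneg fun _ _ => Complex.normSq_nonneg _

lemma landau_aux : ∀ n (s : Multiset ℂ),
    Multiset.countP (fun x => 1 < Complex.normSq x) s = n →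
    (s.map (fun x => max 1 (Complex.normSq x))).prod ≤ Sfn s := by
  intro n
  induction n with
  | zero =>
    intro s hs
    have hall : ∀ x ∈ s, ¬ 1 < Complex.normSq x := by
      intro x hx h
      have := (Multiset.countP_pos (p := fun x => 1 < Complex.normSq x)).2 ⟨x, hx, h⟩
      omega
    have hprod : (s.map (fun x => max 1 (Complex.normSq x))).prod = 1 := by
      apply Multiset.prod_eq_one
      intro x hx
      obtain ⟨y, hy, rfl⟩ := Multiset.mem_map.1 hx
      exact max_eq_left (le_of_not_gt (hall y hy))
    rw [hprod]
    calc (1 : ℝ) = Complex.normSq (s.esymm 0) := by rw [esymm_zero'_s8]; simp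
    _ ≤ Sfn s := Finset.single_le_sum (f := fun k => Complex.normSq (s.esymm k))
        (fun _ _ => Complex.normSq_nonneg _) (Finset.mem_range.2 (Nat.succ_pos _))
  | succ n ih =>
    intro s hs
    have hpos : ∃ x ∈ s, 1 < Complex.normSq x := by
      rw [← Multiset.countP_pos]; omega
    obtain ⟨x, hxs, hx⟩ := hpos
    obtain ⟨t, rfl⟩ := Multiset.exists_cons_of_mem hxs
    have hx0 : x ≠ 0 := by
      intro h; rw [h, map_zero] at hx; norm_num at hx
    set b := (conj' x)⁻¹ with hb
    have hnsb : Complex.normSq b = (Complex.normSq x)⁻¹ := by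
      rw [hb, Complex.normSq_inv, Complex.normSq_conj]
    have hble : Complex.normSq b ≤ 1 := by
      rw [hnsb]
      exact le_of_lt (inv_lt_one_of_one_lt₀ (by linarith))
    have hcount : Multiset.countP (fun x => 1 < Complex.normSq x) (b ::ₘ t) = n := by
      rw [Multiset.countP_cons, if_neg (by exact not_lt.2 hble)]
      rw [Multiset.countP_cons, if_pos hx] at hs
      omega
    have hIH := ih (b ::ₘ t) hcount
    rw [Multiset.map_cons, Multiset.prod_cons, max_eq_left hble] at hIH
    rw [one_mul] at hIH
    rw [Sfn_swap hx0 t, Multiset.map_cons, Multiset.prod_cons,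
      max_eq_right (le_of_lt hx)]
    have hpnn : (0:ℝ) ≤ (t.map (fun x => max 1 (Complex.normSq x))).prod := by
      apply Multiset.prod_nonneg
      intro y hy
      obtain ⟨z, _, rfl⟩ := Multiset.mem_map.1 hy
      positivity
    exact mul_le_mul_of_nonneg_left hIH (Complex.normSq_nonneg x)

end LandauAux

/-- `∏ (1+|aⱼ|²) ≤ 2^p ∑ |s_k|²`, a consequence of Landau's inequality, where
`s_k` is the `k`-th elementary symmetric function of `a₁,…,a_p`. -/
theorem stmt_8 (p : ℕ) (a : Fin p → ℂ) :
    ∏ j, (1 + ‖a j‖ ^ 2)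
      ≤ 2 ^ p * ∑ k ∈ Finset.range (p + 1),
          ‖∑ A ∈ Finset.univ.powersetCard k, ∏ j ∈ A, a j‖ ^ 2 := by
  classical
  set s : Multiset ℂ := Finset.univ.val.map a with hs
  have hcard : Multiset.card s = p := by simp [hs]
  have hRHS : ∑ k ∈ Finset.range (p + 1),
      ‖∑ A ∈ Finset.univ.powersetCard k, ∏ j ∈ A, a j‖ ^ 2 = Sfn s := by
    rw [Sfn, hcard]
    refine Finset.sum_congr rfl fun k _ => ?_
    rw [← Finset.esymm_map_val a Finset.univ k, Complex.sq_norm, hs]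
  have hland := landau_aux _ s rfl
  have hmap : (s.map (fun x => max 1 (Complex.normSq x))).prod
      = ∏ j, max 1 (Complex.normSq (a j)) := by
    rw [hs, Multiset.map_map]; rfl
  calc ∏ j, (1 + ‖a j‖ ^ 2)
      ≤ ∏ j, (2 * max 1 (Complex.normSq (a j))) := by
        apply Finset.prod_le_prod
        · intros; positivity
        · intro j _
          rw [Complex.sq_norm]
          rcases le_total (Complex.normSq (a j)) 1 with h | h
          · rw [max_eq_left h]; linarith
          · rw [max_eq_right h]; linarith
  _ = 2 ^ p * ∏ j, max 1 (Complex.normSq (a j)) := by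
        rw [Finset.prod_mul_distrib, Finset.prod_const, Finset.card_univ, Fintype.card_fin]
  _ ≤ 2 ^ p * Sfn s := by
        refine mul_le_mul_of_nonneg_left ?_ (by positivity)
        rw [← hmap]; exact hland
  _ = _ := by rw [hRHS]
end
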